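/- For every n ≥ 3, the cycle graph C_n on n vertices satisfies c₂(C_n) = n − 2. -/

import Mathlib

open Matrix

/-- A subgraph complementation system for `G`: a finite collection (multiset) of subsets of
vertices such that two distinct vertices are adjacent iff they lie together in an odd
number of the sets. -/
def IsSCS {V : Type*} [DecidableEq V] (G : SimpleGraph V) (𝒞 : Multiset (Finset V)) : Prop :=
  ∀ u v : V, u ≠ v →
    (G.Adj u v ↔ Odd (Multiset.card (𝒞.filter (fun C => u ∈ C ∧ v ∈ C))))

/-- The subgraph complementation number `c₂(G)`: the minimum cardinality of a subgraph
complementation system for `G`. -/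
noncomputable def c2 {V : Type*} [DecidableEq V] (G : SimpleGraph V) : ℕ :=
  sInf {k | ∃ 𝒞 : Multiset (Finset V), IsSCS G 𝒞 ∧ Multiset.card 𝒞 = k}

/-- A symmetric matrix over `F₂` fits `G` if its off-diagonal entries record adjacency. -/
def FitsF2 {V : Type*} (G : SimpleGraph V) (A : Matrix V V (ZMod 2)) : Prop :=
  A.IsSymm ∧ ∀ u v : V, u ≠ v → (A u v = 1 ↔ G.Adj u v)

/-- The minimum rank of `G` over `F₂`: the minimum rank of a symmetric matrix over `F₂`
that fits `G`. -/
noncomputable def mrF2 {V : Type*} [Fintype V] (G : SimpleGraph V) : ℕ :=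
  sInf {k | ∃ A : Matrix V V (ZMod 2), FitsF2 G A ∧ A.rank = k}


lemma mod_helper {n x : ℕ} (hn : 1 < n) (hx : x < 2 * n) :
    x % n = 1 ↔ x = 1 ∨ x = n + 1 := by
  rcases lt_or_ge x n with h | h
  · rw [Nat.mod_eq_of_lt h]; omega
  · have h3 : x - n < n := by omega
    rw [Nat.mod_eq_sub_mod h, Nat.mod_eq_of_lt h3]; omega

lemma cycle_adj_val {n : ℕ} (hn : 3 ≤ n) (u v : Fin n) :
    (SimpleGraph.cycleGraph n).Adj u v ↔
      (v.val = u.val + 1 ∨ u.val = v.val + 1 ∨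
        (u.val = 0 ∧ v.val = n - 1) ∨ (v.val = 0 ∧ u.val = n - 1)) := by
  rw [SimpleGraph.cycleGraph_adj']
  have hu := u.isLt
  have hv := v.isLt
  rw [Fin.sub_def, Fin.sub_def]
  simp only
  rw [mod_helper (by omega) (by omega), mod_helper (by omega) (by omega)]
  omega

lemma odd_iff_cast_one (c : ℕ) : (c : ZMod 2) = 1 ↔ Odd c := by
  have h := ZMod.natCast_mod c 2
  rw [Nat.odd_iff]
  rcases Nat.mod_two_eq_zero_or_one c with h2 | h2 <;> rw [h2] at h <;>
    simp only [Nat.cast_zero, Nat.cast_one] at h <;> rw [← h] <;> simp <;> omega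

lemma even_cast_zero {c : ℕ} (h : Even c) : (c : ZMod 2) = 0 := by
  rw [ZMod.natCast_eq_zero_iff]
  exact h.two_dvd

open Fin.NatCast in
/-- The sets of the explicit complementation system for the cycle. -/
def cycS (n : ℕ) [NeZero n] (k : ℕ) : Finset (Fin n) :=
  {(k : Fin n), ((k + 1 : ℕ) : Fin n), ((n - 1 : ℕ) : Fin n)}

open Fin.NatCast in
lemma mem_cycS {n : ℕ} [NeZero n] (hn : 3 ≤ n) {k : ℕ} (hk : k < n - 2) (u : Fin n) :
    u ∈ cycS n k ↔ (u.val = k ∨ u.val = k + 1 ∨ u.val = n - 1) := by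
  simp only [cycS, Finset.mem_insert, Finset.mem_singleton, Fin.ext_iff, Fin.val_natCast]
  rw [Nat.mod_eq_of_lt (by omega), Nat.mod_eq_of_lt (by omega), Nat.mod_eq_of_lt (by omega)]

lemma count_nat_lt {n a b : ℕ} (hn : 3 ≤ n) (hb : b < n) (hab : a < b) :
    ((b = a + 1 ∨ a = b + 1 ∨ (a = 0 ∧ b = n - 1) ∨ (b = 0 ∧ a = n - 1)) ↔
      Odd (((Finset.range (n - 2)).filter
        (fun k => (a = k ∨ a = k + 1 ∨ a = n - 1) ∧ (b = k ∨ b = k + 1 ∨ b = n - 1))).card)) := by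
  rcases eq_or_lt_of_le (Nat.le_sub_one_of_lt hb) with hb1 | hb1
  · -- b = n - 1
    rcases Nat.eq_zero_or_pos a with ha0 | ha0
    · have hf : (Finset.range (n - 2)).filter
          (fun k => (a = k ∨ a = k + 1 ∨ a = n - 1) ∧ (b = k ∨ b = k + 1 ∨ b = n - 1)) = {0} := by
        ext k
        simp only [Finset.mem_filter, Finset.mem_range, Finset.mem_singleton]
        omega
      rw [hf]
      simp only [Finset.card_singleton]
      constructor
      · intro _; exact odd_one
      · intro _; omega
    · rcases eq_or_lt_of_le (Nat.le_sub_one_of_lt (show a < n - 1 by omega)) with ha2 | ha2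
      · -- a = n - 2
        have hf : (Finset.range (n - 2)).filter
            (fun k => (a = k ∨ a = k + 1 ∨ a = n - 1) ∧ (b = k ∨ b = k + 1 ∨ b = n - 1))
            = {n - 3} := by
          ext k
          simp only [Finset.mem_filter, Finset.mem_range, Finset.mem_singleton]
          omega
        rw [hf]
        simp only [Finset.card_singleton]
        constructor
        · intro _; exact odd_one
        · intro _; omega
      · -- 0 < a < n - 2
        have hf : (Finset.range (n - 2)).filter
            (fun k => (a = k ∨ a = k + 1 ∨ a = n - 1) ∧ (b = k ∨ b = k + 1 ∨ b = n - 1))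
            = {a - 1, a} := by
          ext k
          simp only [Finset.mem_filter, Finset.mem_range, Finset.mem_insert,
            Finset.mem_singleton]
          omega
        rw [hf, Finset.card_pair (by omega)]
        constructor
        · intro h; omega
        · intro h; rw [Nat.odd_iff] at h; omega
  · -- b < n - 1
    by_cases hb2 : b = a + 1
    · have hf : (Finset.range (n - 2)).filter
          (fun k => (a = k ∨ a = k + 1 ∨ a = n - 1) ∧ (b = k ∨ b = k + 1 ∨ b = n - 1)) = {a} := by
        ext k
        simp only [Finset.mem_filter, Finset.mem_range, Finset.mem_singleton]
        omega
      rw [hf]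
      simp only [Finset.card_singleton]
      constructor
      · intro _; exact odd_one
      · intro _; omega
    · have hf : (Finset.range (n - 2)).filter
          (fun k => (a = k ∨ a = k + 1 ∨ a = n - 1) ∧ (b = k ∨ b = k + 1 ∨ b = n - 1)) = ∅ := by
        ext k
        simp only [Finset.mem_filter, Finset.mem_range, Finset.notMem_empty, iff_false]
        omega
      rw [hf]
      simp only [Finset.card_empty]
      constructor
      · intro h; omega
      · intro h; rw [Nat.odd_iff] at h; omega

lemma count_nat {n a b : ℕ} (hn : 3 ≤ n) (ha : a < n) (hb : b < n) (hab : a ≠ b) :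
    ((b = a + 1 ∨ a = b + 1 ∨ (a = 0 ∧ b = n - 1) ∨ (b = 0 ∧ a = n - 1)) ↔
      Odd (((Finset.range (n - 2)).filter
        (fun k => (a = k ∨ a = k + 1 ∨ a = n - 1) ∧ (b = k ∨ b = k + 1 ∨ b = n - 1))).card)) := by
  rcases lt_trichotomy a b with h | h | h
  · exact count_nat_lt hn hb h
  · exact absurd h hab
  · have := count_nat_lt hn ha h
    have hset : (Finset.range (n - 2)).filter
        (fun k => (b = k ∨ b = k + 1 ∨ b = n - 1) ∧ (a = k ∨ a = k + 1 ∨ a = n - 1)) =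
        (Finset.range (n - 2)).filter
        (fun k => (a = k ∨ a = k + 1 ∨ a = n - 1) ∧ (b = k ∨ b = k + 1 ∨ b = n - 1)) := by
      apply Finset.filter_congr
      intro k _
      constructor
      · rintro ⟨h1, h2⟩; exact ⟨h2, h1⟩
      · rintro ⟨h1, h2⟩; exact ⟨h2, h1⟩
    rw [hset] at this
    rw [← this]
    tauto

lemma isSCS_cyc {n : ℕ} [NeZero n] (hn : 3 ≤ n) :
    IsSCS (SimpleGraph.cycleGraph n) ((Multiset.range (n - 2)).map (cycS n)) := by
  intro u v huv
  rw [cycle_adj_val hn]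
  have hcard : Multiset.card ((((Multiset.range (n - 2)).map (cycS n))).filter
      (fun C => u ∈ C ∧ v ∈ C)) =
      ((Finset.range (n - 2)).filter
        (fun k => (u.val = k ∨ u.val = k + 1 ∨ u.val = n - 1) ∧
                  (v.val = k ∨ v.val = k + 1 ∨ v.val = n - 1))).card := by
    rw [← Multiset.countP_eq_card_filter, Multiset.countP_map]
    rw [Finset.card_def, Finset.filter_val, Finset.range_val]
    congr 1
    apply Multiset.filter_congr
    intro k hk
    rw [Multiset.mem_range] at hk
    rw [mem_cycS hn hk, mem_cycS hn hk]
  rw [hcard]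
  exact count_nat hn u.isLt v.isLt (fun h => huv (Fin.ext h))

lemma matrix_rank_add_le {m p : Type*} [Fintype m] [Fintype p] (A B : Matrix m p (ZMod 2)) :
    (A + B).rank ≤ A.rank + B.rank := by
  rw [Matrix.rank, Matrix.rank, Matrix.rank, Matrix.mulVecLin_add]
  have h : LinearMap.range (A.mulVecLin + B.mulVecLin) ≤
      LinearMap.range A.mulVecLin ⊔ LinearMap.range B.mulVecLin := by
    rintro x ⟨y, rfl⟩
    exact Submodule.mem_sup.mpr ⟨A.mulVecLin y, ⟨y, rfl⟩, B.mulVecLin y, ⟨y, rfl⟩, rfl⟩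
  exact le_trans (Submodule.finrank_mono h)
    (Submodule.finrank_add_le_finrank_add_finrank _ _)

lemma rank_outer_le_one {V : Type*} [Fintype V] (x : V → ZMod 2) :
    (Matrix.of fun u v => x u * x v).rank ≤ 1 := by
  have h : (Matrix.of fun u v => x u * x v) =
      (Matrix.of fun u (_ : Unit) => x u) * (Matrix.of fun (_ : Unit) v => x v) := by
    ext u v
    simp [Matrix.mul_apply]
  rw [h]
  refine le_trans (Matrix.rank_mul_le_left _ _) (le_trans (Matrix.rank_le_card_width _) ?_)
  simp

lemma rank_B_le {V : Type*} [Fintype V] [DecidableEq V] (𝒞 : Multiset (Finset V)) :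
    (Matrix.of fun u v : V => (((𝒞.filter fun C => u ∈ C ∧ v ∈ C).card : ℕ) : ZMod 2)).rank
      ≤ Multiset.card 𝒞 := by
  induction 𝒞 using Multiset.induction_on with
  | empty =>
    have h : (Matrix.of fun u v : V =>
        (((Multiset.filter (fun C => u ∈ C ∧ v ∈ C) (0 : Multiset (Finset V))).card : ℕ) : ZMod 2)) = 0 := by
      ext u v
      simp
    rw [h]
    simp
  | cons C s ih =>
    have h : (Matrix.of fun u v : V =>
        ((((C ::ₘ s).filter fun C => u ∈ C ∧ v ∈ C).card : ℕ) : ZMod 2)) =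
        (Matrix.of fun u v : V => (((s.filter fun C => u ∈ C ∧ v ∈ C).card : ℕ) : ZMod 2)) +
        (Matrix.of fun u v : V =>
          ((if u ∈ C then (1 : ZMod 2) else 0) * (if v ∈ C then (1 : ZMod 2) else 0))) := by
      ext u v
      simp only [Matrix.of_apply, Matrix.add_apply, Multiset.filter_cons]
      by_cases hu : u ∈ C <;> by_cases hv : v ∈ C <;>
        simp [hu, hv, Multiset.card_add]
    rw [h]
    refine le_trans (matrix_rank_add_le _ _) ?_
    have h2 := rank_outer_le_one (fun u : V => if u ∈ C then (1 : ZMod 2) else 0)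
    simp only [Multiset.card_cons]
    omega

lemma mul_one_submatrix_left {m n : ℕ} (B : Matrix (Fin n) (Fin n) (ZMod 2))
    (f : Fin m → Fin n) :
    ((1 : Matrix (Fin n) (Fin n) (ZMod 2)).submatrix f id) * B = B.submatrix f id := by
  ext i j
  simp [Matrix.mul_apply, Matrix.one_apply]

lemma mul_one_submatrix_right {m n p : ℕ} (X : Matrix (Fin p) (Fin n) (ZMod 2))
    (g : Fin m → Fin n) :
    X * ((1 : Matrix (Fin n) (Fin n) (ZMod 2)).submatrix id g) = X.submatrix id g := by
  ext i j
  simp [Matrix.mul_apply, Matrix.one_apply]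

lemma rank_B_ge {n : ℕ} (hn : 3 ≤ n) (𝒞 : Multiset (Finset (Fin n)))
    (hS : IsSCS (SimpleGraph.cycleGraph n) 𝒞) :
    n - 2 ≤ (Matrix.of fun u v : Fin n =>
      (((𝒞.filter fun C => u ∈ C ∧ v ∈ C).card : ℕ) : ZMod 2)).rank := by
  set B : Matrix (Fin n) (Fin n) (ZMod 2) := Matrix.of fun u v : Fin n =>
      (((𝒞.filter fun C => u ∈ C ∧ v ∈ C).card : ℕ) : ZMod 2) with hBdef
  set f : Fin (n - 2) → Fin n := fun i => ⟨i.val, by have := i.isLt; omega⟩ with hf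
  set g : Fin (n - 2) → Fin n := fun j => ⟨j.val + 1, by have := j.isLt; omega⟩ with hg
  set M : Matrix (Fin (n - 2)) (Fin (n - 2)) (ZMod 2) := B.submatrix f g with hM
  have hdiag : ∀ i, M i i = 1 := by
    intro i
    have hne : f i ≠ g i := by
      simp only [hf, hg, ne_eq, Fin.mk.injEq]
      omega
    have hadj : (SimpleGraph.cycleGraph n).Adj (f i) (g i) := by
      rw [cycle_adj_val hn]
      left; rfl
    have hodd := (hS (f i) (g i) hne).mp hadj
    exact (odd_iff_cast_one _).mpr hodd
  have hzero : ∀ i j, i < j → M i j = 0 := by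
    intro i j hij
    rw [Fin.lt_def] at hij
    have hne : f i ≠ g j := by
      simp only [hf, hg, ne_eq, Fin.mk.injEq]
      omega
    have hnadj : ¬ (SimpleGraph.cycleGraph n).Adj (f i) (g j) := by
      rw [cycle_adj_val hn]
      have hi := i.isLt
      have hj := j.isLt
      simp only [hf, hg]
      omega
    have heven : Even (Multiset.card (𝒞.filter fun C => f i ∈ C ∧ g j ∈ C)) := by
      rw [← Nat.not_odd_iff_even]
      intro hodd
      exact hnadj ((hS (f i) (g j) hne).mpr hodd)
    exact even_cast_zero heven
  have hTri : M.BlockTriangular OrderDual.toDual := by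
    intro i j hij
    exact hzero i j hij
  have hdet : M.det = 1 := by
    rw [Matrix.det_of_lowerTriangular M hTri]
    exact Finset.prod_eq_one (fun i _ => hdiag i)
  have hunit : IsUnit M := (Matrix.isUnit_iff_isUnit_det M).mpr (hdet ▸ isUnit_one)
  have hrankM : M.rank = n - 2 := by
    rw [Matrix.rank_of_isUnit M hunit, Fintype.card_fin]
  have hfact : M = (((1 : Matrix (Fin n) (Fin n) (ZMod 2)).submatrix f id) * B) *
      ((1 : Matrix (Fin n) (Fin n) (ZMod 2)).submatrix id g) := by
    rw [mul_one_submatrix_left, mul_one_submatrix_right, Matrix.submatrix_submatrix]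
    rfl
  calc n - 2 = M.rank := hrankM.symm
    _ ≤ (((1 : Matrix (Fin n) (Fin n) (ZMod 2)).submatrix f id) * B).rank := by
        rw [hfact]; exact Matrix.rank_mul_le_left _ _
    _ ≤ B.rank := Matrix.rank_mul_le_right _ _


theorem stmt3 (n : ℕ) (hn : 3 ≤ n) :
    c2 (SimpleGraph.cycleGraph n) = n - 2 := by
  haveI : NeZero n := ⟨by omega⟩
  have hmem : (n - 2) ∈ {k | ∃ 𝒞 : Multiset (Finset (Fin n)),
      IsSCS (SimpleGraph.cycleGraph n) 𝒞 ∧ Multiset.card 𝒞 = k} :=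
    ⟨(Multiset.range (n - 2)).map (cycS n), isSCS_cyc hn, by simp⟩
  have hlb : ∀ k ∈ {k | ∃ 𝒞 : Multiset (Finset (Fin n)),
      IsSCS (SimpleGraph.cycleGraph n) 𝒞 ∧ Multiset.card 𝒞 = k}, n - 2 ≤ k := by
    rintro k ⟨𝒞, hS, rfl⟩
    exact le_trans (rank_B_ge hn 𝒞 hS) (rank_B_le 𝒞)
  exact le_antisymm (Nat.sInf_le hmem) (le_csInf ⟨_, hmem⟩ hlb)
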